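/- Let (X, 𝓑) be a primitive uniform space, let Y ⊆ X be nonempty, and let f : X → X be a mapping with f(Y) ⊆ Y. Write Z := c_𝓑(f, Y). If f(Y ∩ B(x)) ⊆ B(f(x)) holds for every x ∈ Z and every B ∈ 𝓑, then f maps Z into Z, i.e. f(Z) ⊆ Z. -/

import Mathlib

/-- For an entourage `B ⊆ X × X` and `x : X`, `entBall B x = {y | (x, y) ∈ B}`. -/
def entBall {X : Type*} (B : Set (X × X)) (x : X) : Set X := {y | (x, y) ∈ B}

/-- The centre `c_𝓑(f, Y)` of a mapping `f : X → X` on `Y ⊆ X`. -/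
def centreMap {X : Type*} (𝓑 : Set (Set (X × X))) (f : X → X) (Y : Set X) : Set X :=
  {x | ⋂₀ {B ∈ 𝓑 | ∃ n : ℕ, ∃ z : X, f^[n] '' Y ⊆ entBall B z} =
       ⋂₀ {B ∈ 𝓑 | ∃ n : ℕ, f^[n] '' Y ⊆ entBall B x}}

/-- first part of Lemma 13: in a primitive uniform space `(X, 𝓑)`, if
`Y ⊆ X` is nonempty, `f(Y) ⊆ Y`, and `f(Y ∩ B(x)) ⊆ B(f(x))` holds for every
`x ∈ Z := c_𝓑(f, Y)` and every `B ∈ 𝓑`, then `f(Z) ⊆ Z`. -/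
theorem stmt8 {X : Type*} [Nonempty X] (𝓑 : Set (Set (X × X)))
    (hUniv : (Set.univ : Set (X × X)) ∈ 𝓑)
    (f : X → X) (Y : Set X) (hY : Y.Nonempty) (hfY : f '' Y ⊆ Y)
    (hB : ∀ x ∈ centreMap 𝓑 f Y, ∀ B ∈ 𝓑,
      f '' (Y ∩ entBall B x) ⊆ entBall B (f x)) :
    f '' centreMap 𝓑 f Y ⊆ centreMap 𝓑 f Y := by
  rintro _ ⟨x, hx, rfl⟩
  have hYn : ∀ n : ℕ, f^[n] '' Y ⊆ Y := by
    intro n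
    induction n with
    | zero => simp
    | succ n ih =>
      rw [Function.iterate_succ', Set.image_comp]
      exact (Set.image_mono (f := f) ih).trans hfY
  have hxc : ⋂₀ {B ∈ 𝓑 | ∃ n : ℕ, ∃ z : X, f^[n] '' Y ⊆ entBall B z} =
      ⋂₀ {B ∈ 𝓑 | ∃ n : ℕ, f^[n] '' Y ⊆ entBall B x} := hx
  show ⋂₀ {B ∈ 𝓑 | ∃ n : ℕ, ∃ z : X, f^[n] '' Y ⊆ entBall B z} =
      ⋂₀ {B ∈ 𝓑 | ∃ n : ℕ, f^[n] '' Y ⊆ entBall B (f x)}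
  apply Set.Subset.antisymm
  · exact Set.sInter_subset_sInter (fun B hBmem => ⟨hBmem.1,
      hBmem.2.elim fun n hn => ⟨n, f x, hn⟩⟩)
  · rw [hxc]
    apply Set.sInter_subset_sInter
    rintro B ⟨hB𝓑, n, hn⟩
    refine ⟨hB𝓑, n + 1, ?_⟩
    rw [Function.iterate_succ', Set.image_comp]
    exact (Set.image_mono (f := f) (Set.subset_inter (hYn n) hn)).trans
      (hB x hx B hB𝓑)
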